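/- Let Z ⊆ ℝ^N be a bounded domain, let λ_{n+1} be the (n+1)-th distinct Dirichlet eigenvalue of −Δ on H¹₀(Z), and let Ĥ_n be the closed span of eigenfunctions corresponding to eigenvalues λ_i with i ≥ n+1. Let β ∈ L^∞(Z) with β(z) ≤ λ_{n+1} a.e. and β(z) < λ_{n+1} on a set of positive measure. Then there exists ξ₁ > 0 such that ‖∇x‖₂² − ∫_Z β(z)|x(z)|² dz ≥ ξ₁‖∇x‖₂² for all x ∈ Ĥ_n. -/

import Mathlib

open Filter Topology MeasureTheory

set_option maxHeartbeats 1000000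

/-- Abstract form of Lemma 2. `H` plays the role of `H¹₀(Z)` with the gradient
inner product (so `‖x‖ = ‖∇x‖₂`), `ι x` is the realization of `x` as a function
on `Z`, `lam = λ_{n+1}` and `Hn = Ĥ_n`.  The hypotheses encode: the Rayleigh
quotient characterization of `λ_{n+1}` on `Ĥ_n`, the compact embedding
`H¹₀ ⊆ L²` (bounded sequences in `Ĥ_n` admit subsequences converging weakly in
`H¹₀` and strongly in `L²`), and the unique continuation property of the
eigenspace `E(λ_{n+1}) = {x ∈ Ĥ_n : ‖∇x‖₂² = λ_{n+1}‖x‖₂²}`.  If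
`β ∈ L^∞(Z)`, `β ≤ λ_{n+1}` a.e. with strict inequality on a set of positive
measure, then `‖∇x‖₂² − ∫ β|x|² ≥ ξ₁‖∇x‖₂²` on `Ĥ_n` for some `ξ₁ > 0`. -/
theorem rayleigh_gap {H : Type*} [NormedAddCommGroup H] [InnerProductSpace ℝ H]
    [CompleteSpace H] {Z : Type*} [MeasurableSpace Z] (μ : Measure Z) [IsFiniteMeasure μ]
    (ι : H →ₗ[ℝ] (Z → ℝ)) (Hn : Submodule ℝ H) (lam : ℝ) (hlam : 0 < lam)
    (hmeas : ∀ x : H, Measurable (ι x))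
    (hint : ∀ x : H, Integrable (fun z => (ι x z) ^ 2) μ)
    (hRayleigh : ∀ x ∈ Hn, lam * ∫ z, (ι x z) ^ 2 ∂μ ≤ ‖x‖ ^ 2)
    (hCompact : ∀ x : ℕ → H, (∀ k, x k ∈ Hn) → (∀ k, ‖x k‖ ≤ 1) →
      ∃ (x₀ : H) (σ : ℕ → ℕ), StrictMono σ ∧ x₀ ∈ Hn ∧
        (∀ y : H, Tendsto (fun k => inner ℝ (x (σ k)) y) atTop (nhds (inner ℝ x₀ y : ℝ))) ∧
        Tendsto (fun k => ∫ z, (ι (x (σ k)) z - ι x₀ z) ^ 2 ∂μ) atTop (nhds (0 : ℝ)))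
    (hUC : ∀ x ∈ Hn, ‖x‖ ^ 2 = lam * ∫ z, (ι x z) ^ 2 ∂μ →
      0 < μ {z | ι x z = 0} → x = 0)
    (β : Z → ℝ) (hβmeas : Measurable β) (hβbdd : ∃ C, ∀ z, |β z| ≤ C)
    (hβle : ∀ᵐ z ∂μ, β z ≤ lam) (hβlt : 0 < μ {z | β z < lam}) :
    ∃ ξ₁ > (0 : ℝ), ∀ x ∈ Hn,
      ξ₁ * ‖x‖ ^ 2 ≤ ‖x‖ ^ 2 - ∫ z, β z * (ι x z) ^ 2 ∂μ := by
  by_contra hcon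
  push_neg at hcon
  obtain ⟨C, hC⟩ := hβbdd
  set C' : ℝ := |C| + 1 with hC'def
  have hC'pos : 0 < C' := by positivity
  have hC' : ∀ z, |β z| ≤ C' := fun z => (hC z).trans (by simp [hC'def]; linarith [le_abs_self C])
  -- integrability of β * (ι x)^2
  have hIβ : ∀ x : H, Integrable (fun z => β z * (ι x z) ^ 2) μ := by
    intro x
    exact (hint x).bdd_mul hβmeas.aestronglyMeasurable (c := C') (Eventually.of_forall fun z => by
      simpa [Real.norm_eq_abs] using hC' z)
  -- select normalized sequence
  have hsel : ∀ k : ℕ, ∃ x : H, x ∈ Hn ∧ ‖x‖ = 1 ∧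
      1 - ∫ z, β z * (ι x z) ^ 2 ∂μ < ((k : ℝ) + 1)⁻¹ := by
    intro k
    obtain ⟨y, hy, hlt⟩ := hcon ((k : ℝ) + 1)⁻¹ (by positivity)
    have hy0 : y ≠ 0 := by
      rintro rfl
      simp at hlt
    have hny : (0 : ℝ) < ‖y‖ := norm_pos_iff.mpr hy0
    refine ⟨‖y‖⁻¹ • y, Hn.smul_mem _ hy, ?_, ?_⟩
    · simp [norm_smul, abs_of_nonneg hny.le, inv_mul_cancel₀ hny.ne']
    · have hι : ∀ z, ι (‖y‖⁻¹ • y) z = ‖y‖⁻¹ * ι y z := fun z => by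
        rw [ι.map_smul]; simp
      have hrw : ∫ z, β z * (ι (‖y‖⁻¹ • y) z) ^ 2 ∂μ
          = ‖y‖⁻¹ ^ 2 * ∫ z, β z * (ι y z) ^ 2 ∂μ := by
        rw [← integral_const_mul]
        refine integral_congr_ae (Eventually.of_forall fun z => ?_)
        simp only [hι]; ring
      rw [hrw]
      have h1 : ‖y‖⁻¹ ^ 2 * ‖y‖ ^ 2 = 1 := by
        field_simp
      have h2 : ‖y‖⁻¹ ^ 2 * (‖y‖ ^ 2 - ∫ z, β z * (ι y z) ^ 2 ∂μ)
          < ‖y‖⁻¹ ^ 2 * (((k : ℝ) + 1)⁻¹ * ‖y‖ ^ 2) := by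
        exact mul_lt_mul_of_pos_left hlt (by positivity)
      calc 1 - ‖y‖⁻¹ ^ 2 * ∫ z, β z * (ι y z) ^ 2 ∂μ
          = ‖y‖⁻¹ ^ 2 * (‖y‖ ^ 2 - ∫ z, β z * (ι y z) ^ 2 ∂μ) := by
            rw [mul_sub, h1]
        _ < ‖y‖⁻¹ ^ 2 * (((k : ℝ) + 1)⁻¹ * ‖y‖ ^ 2) := h2
        _ = ((k : ℝ) + 1)⁻¹ := by rw [show ‖y‖⁻¹ ^ 2 * (((k:ℝ)+1)⁻¹ * ‖y‖^2)
              = ((k:ℝ)+1)⁻¹ * (‖y‖⁻¹ ^ 2 * ‖y‖ ^ 2) from by ring, h1, mul_one]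
  choose x hxmem hxnorm hxlt using hsel
  obtain ⟨x₀, σ, hσ, hx₀mem, hweak, hL2⟩ := hCompact x hxmem (fun k => (hxnorm k).le)
  -- weak lower semicontinuity of the norm
  have hx0le1 : ‖x₀‖ ≤ 1 := by
    have hb : ∀ k, (inner ℝ (x (σ k)) x₀ : ℝ) ≤ ‖x₀‖ := fun k => by
      calc (inner ℝ (x (σ k)) x₀ : ℝ) ≤ ‖x (σ k)‖ * ‖x₀‖ := real_inner_le_norm _ _
        _ = ‖x₀‖ := by rw [hxnorm, one_mul]
    have h2 : ‖x₀‖ ^ 2 ≤ ‖x₀‖ := by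
      have := le_of_tendsto (hweak x₀) (Eventually.of_forall hb)
      rwa [real_inner_self_eq_norm_sq] at this
    nlinarith [norm_nonneg x₀]
  -- Rayleigh bounds on L² norms
  have hsqle : ∀ y : H, y ∈ Hn → ‖y‖ ≤ 1 → ∫ z, (ι y z) ^ 2 ∂μ ≤ lam⁻¹ := by
    intro y hy hny
    have h := hRayleigh y hy
    have h1 : ‖y‖ ^ 2 ≤ 1 := by nlinarith [norm_nonneg y]
    have h3 : lam * (∫ z, (ι y z) ^ 2 ∂μ) ≤ 1 := le_trans h h1
    calc (∫ z, (ι y z) ^ 2 ∂μ) = lam⁻¹ * (lam * ∫ z, (ι y z) ^ 2 ∂μ) := by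
          field_simp
      _ ≤ lam⁻¹ * 1 := mul_le_mul_of_nonneg_left h3 (by positivity)
      _ = lam⁻¹ := mul_one _
  -- notation
  set I₀ : ℝ := ∫ z, β z * (ι x₀ z) ^ 2 ∂μ with hI₀def
  set J₀ : ℝ := ∫ z, (ι x₀ z) ^ 2 ∂μ with hJ₀def
  -- pointwise key inequality
  have key2 : ∀ (t a b B : ℝ), 0 < t → |B| ≤ C' →
      2 * t * (B * a ^ 2 - B * b ^ 2) ≤ C' * t ^ 2 * (a + b) ^ 2 + C' * (a - b) ^ 2 := by
    intro t a b B ht hB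
    obtain ⟨hB1, hB2⟩ := abs_le.mp hB
    nlinarith [mul_nonneg (sub_nonneg.mpr hB2) (sq_nonneg (t * (a + b) + (a - b))),
      mul_nonneg (by linarith : (0:ℝ) ≤ C' + B) (sq_nonneg (t * (a + b) - (a - b)))]
  have key : ∀ (t s a b B : ℝ), 0 < t → t * s = 1 → |B| ≤ C' →
      B * a ^ 2 - B * b ^ 2 ≤ C' * t / 2 * (a + b) ^ 2 + C' * s / 2 * (a - b) ^ 2 := by
    intro t s a b B ht hts hB
    have hs : s = t⁻¹ := by
      field_simp
      nlinarith [hts]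
    subst hs
    have h2t : (0:ℝ) < 2 * t := by positivity
    rw [← mul_le_mul_iff_right₀ h2t]
    calc 2 * t * (B * a ^ 2 - B * b ^ 2)
        ≤ C' * t ^ 2 * (a + b) ^ 2 + C' * (a - b) ^ 2 := key2 t a b B ht hB
      _ = 2 * t * (C' * t / 2 * (a + b) ^ 2 + C' * t⁻¹ / 2 * (a - b) ^ 2) := by
          field_simp
  -- the main estimate: for each t > 0, 1 ≤ I₀ + 2*C'*t/lam
  have hmain : ∀ t : ℝ, 0 < t → 1 ≤ I₀ + 2 * C' * t * lam⁻¹ := by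
    intro t ht
    set s : ℝ := t⁻¹ with hsdef
    have hts : t * s = 1 := mul_inv_cancel₀ ht.ne'
    have hs : 0 < s := by positivity
    -- per k inequality
    have hk : ∀ k : ℕ, 1 - ((σ k : ℝ) + 1)⁻¹
        - C' * s / 2 * (∫ z, (ι (x (σ k)) z - ι x₀ z) ^ 2 ∂μ)
        ≤ I₀ + 2 * C' * t * lam⁻¹ := by
      intro k
      set y := x (σ k) with hydef
      have hI1 : Integrable (fun z => (ι y z + ι x₀ z) ^ 2) μ := by
        have := hint (y + x₀)
        simpa [map_add] using this
      have hI2 : Integrable (fun z => (ι y z - ι x₀ z) ^ 2) μ := by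
        have := hint (y - x₀)
        simpa [map_sub] using this
      -- integral of the pointwise bound
      have hmono : (∫ z, (β z * (ι y z) ^ 2 - β z * (ι x₀ z) ^ 2) ∂μ)
          ≤ ∫ z, (C' * t / 2 * (ι y z + ι x₀ z) ^ 2 + C' * s / 2 * (ι y z - ι x₀ z) ^ 2) ∂μ := by
        refine integral_mono ((hIβ y).sub (hIβ x₀)) ((hI1.const_mul _).add (hI2.const_mul _)) ?_
        intro z
        exact key t s (ι y z) (ι x₀ z) (β z) ht hts (hC' z)
      rw [integral_sub (hIβ y) (hIβ x₀), integral_add (hI1.const_mul _) (hI2.const_mul _),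
        integral_const_mul, integral_const_mul] at hmono
      -- bound the sum integral
      have hsum : ∫ z, (ι y z + ι x₀ z) ^ 2 ∂μ ≤ 2 * lam⁻¹ + 2 * lam⁻¹ := by
        have hp : ∀ z, (ι y z + ι x₀ z) ^ 2 ≤ 2 * (ι y z) ^ 2 + 2 * (ι x₀ z) ^ 2 := by
          intro z; nlinarith [sq_nonneg (ι y z - ι x₀ z)]
        calc ∫ z, (ι y z + ι x₀ z) ^ 2 ∂μ
            ≤ ∫ z, (2 * (ι y z) ^ 2 + 2 * (ι x₀ z) ^ 2) ∂μ :=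
              integral_mono hI1 (((hint y).const_mul 2).add ((hint x₀).const_mul 2)) hp
          _ = 2 * (∫ z, (ι y z) ^ 2 ∂μ) + 2 * (∫ z, (ι x₀ z) ^ 2 ∂μ) := by
              rw [integral_add ((hint y).const_mul 2) ((hint x₀).const_mul 2),
                integral_const_mul, integral_const_mul]
          _ ≤ 2 * lam⁻¹ + 2 * lam⁻¹ := by
              have h1 := hsqle y (hxmem _) (hxnorm _).le
              have h2 := hsqle x₀ hx₀mem hx0le1
              nlinarith
      have hβk : 1 - ((σ k : ℝ) + 1)⁻¹ < ∫ z, β z * (ι y z) ^ 2 ∂μ := by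
        linarith [hxlt (σ k)]
      have hCt : 0 ≤ C' * t / 2 := by positivity
      nlinarith [hmono, hsum, hβk, mul_le_mul_of_nonneg_left hsum hCt]
    -- pass to the limit
    have htend : Tendsto (fun k => 1 - ((σ k : ℝ) + 1)⁻¹
        - C' * s / 2 * (∫ z, (ι (x (σ k)) z - ι x₀ z) ^ 2 ∂μ)) atTop (nhds (1 : ℝ)) := by
      have h1 : Tendsto (fun k : ℕ => ((σ k : ℝ) + 1)⁻¹) atTop (nhds 0) := by
        have hbase : Tendsto (fun n : ℕ => ((n : ℝ) + 1)⁻¹) atTop (nhds 0) := by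
          simpa [one_div] using tendsto_one_div_add_atTop_nhds_zero_nat (𝕜 := ℝ)
        exact hbase.comp hσ.tendsto_atTop
      have h2 : Tendsto (fun k => C' * s / 2 * (∫ z, (ι (x (σ k)) z - ι x₀ z) ^ 2 ∂μ))
          atTop (nhds 0) := by
        simpa using hL2.const_mul (C' * s / 2)
      have := (tendsto_const_nhds (x := (1:ℝ)) (f := atTop)).sub h1 |>.sub h2
      simpa using this
    exact le_of_tendsto htend (Eventually.of_forall hk)
  -- conclude 1 ≤ I₀
  have h1I : 1 ≤ I₀ := by
    refine le_of_forall_pos_le_add fun ε hε => ?_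
    have ht : 0 < ε * lam / (2 * C') := by positivity
    have := hmain _ ht
    have heq : 2 * C' * (ε * lam / (2 * C')) * lam⁻¹ = ε := by
      field_simp
    linarith [heq ▸ this]
  -- chain of inequalities
  have hI0le : I₀ ≤ lam * J₀ := by
    rw [hI₀def, hJ₀def, ← integral_const_mul]
    refine integral_mono_ae (hIβ x₀) ((hint x₀).const_mul lam) ?_
    filter_upwards [hβle] with z hz
    exact mul_le_mul_of_nonneg_right hz (sq_nonneg _)
  have hR : lam * J₀ ≤ ‖x₀‖ ^ 2 := hRayleigh x₀ hx₀mem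
  have hn1 : ‖x₀‖ ^ 2 ≤ 1 := by nlinarith [norm_nonneg x₀]
  have heig : ‖x₀‖ ^ 2 = lam * J₀ := by linarith
  have hIJ : lam * J₀ - I₀ = 0 := by linarith
  -- a.e. vanishing of (lam - β) * (ι x₀)²
  have hzero : (fun z => lam * (ι x₀ z) ^ 2 - β z * (ι x₀ z) ^ 2) =ᵐ[μ] 0 := by
    have hintf : Integrable (fun z => lam * (ι x₀ z) ^ 2 - β z * (ι x₀ z) ^ 2) μ :=
      ((hint x₀).const_mul lam).sub (hIβ x₀)
    have hnn : 0 ≤ᵐ[μ] fun z => lam * (ι x₀ z) ^ 2 - β z * (ι x₀ z) ^ 2 := by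
      filter_upwards [hβle] with z hz
      have := mul_le_mul_of_nonneg_right hz (sq_nonneg (ι x₀ z))
      simpa [sub_nonneg] using this
    have hI : ∫ z, (lam * (ι x₀ z) ^ 2 - β z * (ι x₀ z) ^ 2) ∂μ = 0 := by
      rw [integral_sub ((hint x₀).const_mul lam) (hIβ x₀), integral_const_mul]
      exact hIJ
    exact (integral_eq_zero_iff_of_nonneg_ae hnn hintf).mp hI
  -- positive measure vanishing set
  have hSpos : 0 < μ {z | ι x₀ z = 0} := by
    have hnull : μ ({z | β z < lam} \ {z | ι x₀ z = 0}) = 0 := by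
      have hsub : {z | β z < lam} \ {z | ι x₀ z = 0}
          ⊆ {z | ¬ (lam * (ι x₀ z) ^ 2 - β z * (ι x₀ z) ^ 2 = 0)} := by
        rintro z ⟨hz1, hz2⟩
        simp only [Set.mem_setOf_eq] at hz1 hz2 ⊢
        have h1 : 0 < lam - β z := by linarith
        have h2 : 0 < (ι x₀ z) ^ 2 := by positivity
        nlinarith
      refine measure_mono_null hsub ?_
      have := hzero
      rw [Filter.EventuallyEq, ae_iff] at this
      simpa using this
    calc 0 < μ {z | β z < lam} := hβlt
      _ ≤ μ ({z | ι x₀ z = 0} ∪ ({z | β z < lam} \ {z | ι x₀ z = 0})) := by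
          refine measure_mono fun z hz => ?_
          by_cases h : ι x₀ z = 0
          · exact Or.inl h
          · exact Or.inr ⟨hz, h⟩
      _ ≤ μ {z | ι x₀ z = 0} + μ ({z | β z < lam} \ {z | ι x₀ z = 0}) := measure_union_le _ _
      _ = μ {z | ι x₀ z = 0} := by rw [hnull, add_zero]
  have hx00 : x₀ = 0 := hUC x₀ hx₀mem heig hSpos
  rw [hx00] at heig hn1
  have : lam * J₀ = 0 := by simpa using heig.symm
  have h1 : (1:ℝ) ≤ 0 := by
    have : I₀ ≤ 0 := by nlinarith
    linarith
  linarith
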